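/- For every d ∈ ℕ and every j ∈ {1,…,d}, the j-th successive minimum of the difference body of the standard terminal simplex with respect to ℤ^d satisfies λ_j(T_d − T_d, ℤ^d) = d/(d+1). -/

import Mathlib

open scoped Pointwise

/-- The integer lattice `ℤ^d` inside `ℝ^d`. -/
def intLat (d : ℕ) : Set (Fin d → ℝ) := {x | ∀ j, ∃ m : ℤ, x j = (m : ℝ)}

/-- The standard terminal simplex `T_d = conv(-𝟙_d, e_1, …, e_d) ⊆ ℝ^d`. -/
def stdTerminal (d : ℕ) : Set (Fin d → ℝ) :=
  convexHull ℝ (insert (fun _ => (-1 : ℝ)) (Set.range fun j : Fin d => Pi.single j (1 : ℝ)))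

/-- The `j`-th successive minimum of a (centrally symmetric) convex body `C ⊆ ℝ^d` with
respect to `ℤ^d`: the least `l > 0` such that `l • C` contains `j` linearly independent
lattice points. -/
noncomputable def succMin (d j : ℕ) (C : Set (Fin d → ℝ)) : ℝ :=
  sInf {l : ℝ | 0 < l ∧ ∃ v : Fin j → (Fin d → ℝ),
    (∀ t, v t ∈ intLat d) ∧ LinearIndependent ℝ v ∧ ∀ t, v t ∈ l • C}

/- ### Auxiliary lemmas -/

lemma TDS.linear_bound (d : ℕ) (u : Fin d → ℝ) (c : ℝ)
    (h0 : -∑ i, u i ≤ c) (h1 : ∀ k, u k ≤ c) :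
    ∀ x ∈ stdTerminal d, ∑ i, u i * x i ≤ c := by
  intro x hx
  have hlin : IsLinearMap ℝ (fun x : Fin d → ℝ => ∑ i, u i * x i) := by
    constructor
    · intro a b; simp [mul_add, Finset.sum_add_distrib]
    · intro r a
      simp only [Pi.smul_apply, smul_eq_mul, Finset.mul_sum]
      exact Finset.sum_congr rfl fun i _ => by ring
  have hsub : stdTerminal d ⊆ {x : Fin d → ℝ | ∑ i, u i * x i ≤ c} := by
    apply convexHull_min _ (convex_halfSpace_le hlin c)
    rintro y (rfl | ⟨k, rfl⟩)
    · simpa [mul_comm] using h0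
    · simpa [Pi.single_apply] using h1 k
  exact hsub hx

lemma TDS.diff_bound (d : ℕ) (u : Fin d → ℝ) (c₁ c₂ : ℝ)
    (h0 : -∑ i, u i ≤ c₁) (h1 : ∀ k, u k ≤ c₁)
    (h0' : ∑ i, u i ≤ c₂) (h1' : ∀ k, -u k ≤ c₂)
    (x y : Fin d → ℝ) (hx : x ∈ stdTerminal d) (hy : y ∈ stdTerminal d) :
    ∑ i, u i * (x i - y i) ≤ c₁ + c₂ := by
  have hxb := TDS.linear_bound d u c₁ h0 h1 x hx
  have hyb := TDS.linear_bound d (fun k => -u k) c₂ (by simpa using h0') h1' y hy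
  have : ∑ i, u i * (x i - y i) = ∑ i, u i * x i + ∑ i, (fun k => -u k) i * y i := by
    rw [← Finset.sum_add_distrib]
    exact Finset.sum_congr rfl fun i _ => by ring
  rw [this]
  exact add_le_add hxb hyb

lemma TDS.key_mixed (d : ℕ) (l : ℝ) (hl : 0 < l) (m : Fin d → ℤ) (i j : Fin d)
    (hi : 1 ≤ m i) (hj : m j ≤ -1)
    (x y : Fin d → ℝ) (hx : x ∈ stdTerminal d) (hy : y ∈ stdTerminal d)
    (heq : ∀ k, (m k : ℝ) = l * (x k - y k)) : 1 ≤ l := by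
  have hij : i ≠ j := by rintro rfl; omega
  set u : Fin d → ℝ := fun k => (if k = i then (1:ℝ) else 0) - (if k = j then (1:ℝ) else 0) with hu
  have hsu : ∑ k, u k = 0 := by
    simp [hu, Finset.sum_sub_distrib]
  have hb : ∀ k, u k ≤ 1 := by
    intro k; simp only [hu]; split_ifs <;> norm_num
  have hbn : ∀ k, -u k ≤ 1 := by
    intro k; simp only [hu]; split_ifs <;> norm_num
  have hdb := TDS.diff_bound d u 1 1 (by rw [hsu]; norm_num) hb (by rw [hsu]; norm_num) hbn x y hx hy
  have hfz : ∀ g : Fin d → ℝ, ∑ k, u k * g k = g i - g j := by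
    intro g
    simp [hu, sub_mul, Finset.sum_sub_distrib, ite_mul, Finset.sum_ite_eq']
  have hzval : (m i : ℝ) - (m j : ℝ) = l * ((x i - y i) - (x j - y j)) := by
    rw [heq i, heq j]; ring
  have h2 : (2:ℝ) ≤ (m i : ℝ) - (m j : ℝ) := by
    have : (2:ℤ) ≤ m i - m j := by omega
    exact_mod_cast this
  have hxy2 : (x i - y i) - (x j - y j) ≤ 2 := by
    have h5 := hdb
    rw [show ∑ k, u k * (x k - y k) = (x i - y i) - (x j - y j) from hfz _] at h5
    linarith
  nlinarith [hzval, h2, hxy2, hl.le]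

lemma TDS.key_nonneg (d : ℕ) (l : ℝ) (hl : 0 < l) (m : Fin d → ℤ)
    (hmnn : ∀ i, 0 ≤ m i) (i0 : Fin d) (hi0 : 1 ≤ m i0)
    (x y : Fin d → ℝ) (hx : x ∈ stdTerminal d) (hy : y ∈ stdTerminal d)
    (heq : ∀ i, (m i : ℝ) = l * (x i - y i)) :
    (d : ℝ) / ((d : ℝ) + 1) ≤ l := by
  classical
  set S : Finset (Fin d) := Finset.univ.filter (fun i => m i ≠ 0) with hS
  set p : ℕ := S.card with hp
  have hi0S : i0 ∈ S := by simp [hS]; omega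
  have hp1 : 1 ≤ p := Finset.card_pos.2 ⟨i0, hi0S⟩
  have hpd : p ≤ d := by
    calc p ≤ (Finset.univ : Finset (Fin d)).card := Finset.card_filter_le _ _
    _ = d := Finset.card_fin d
  set u : Fin d → ℝ := fun i => if i ∈ S then ((d:ℝ) + 1) - p else -(p:ℝ) with hu
  have hcardc : (Finset.univ.filter (fun i => ¬ m i ≠ 0)).card = d - p := by
    have h2 := Finset.card_filter_add_card_filter_not
      (s := (Finset.univ : Finset (Fin d))) (p := fun i => m i ≠ 0)
    simp only [Finset.card_fin] at h2
    rw [hp, hS]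
    omega
  have hsplit : ∀ g : Fin d → ℝ, ∑ i, u i * g i
      = (((d:ℝ) + 1) - p) * (∑ i ∈ S, g i) + (-(p:ℝ)) * (∑ i ∈ Finset.univ.filter (fun i => ¬ m i ≠ 0), g i) := by
    intro g
    rw [← Finset.sum_filter_add_sum_filter_not Finset.univ (fun i => m i ≠ 0), Finset.mul_sum, Finset.mul_sum]
    congr 1
    · apply Finset.sum_congr rfl
      intro i hi; simp only [hu]; rw [if_pos (by rwa [hS])]
    · apply Finset.sum_congr rfl
      intro i hi
      simp only [hu]; rw [if_neg (by simpa [hS] using (Finset.mem_filter.1 hi).2)]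
  have hsu : ∑ i, u i = p := by
    have h3 := hsplit (fun _ => 1)
    simp only [mul_one] at h3
    rw [h3]
    simp only [Finset.sum_const, nsmul_eq_mul, mul_one, hcardc, ← hS, ← hp]
    push_cast [Nat.cast_sub hpd]
    ring
  have hpR1 : (1:ℝ) ≤ (p:ℝ) := by exact_mod_cast hp1
  have hpRd : (p:ℝ) ≤ (d:ℝ) := by exact_mod_cast hpd
  have h1 : ∀ k, u k ≤ ((d:ℝ) + 1) - p := by
    intro k; simp only [hu]; split_ifs
    · exact le_refl _
    · linarith
  have h1' : ∀ k, -u k ≤ (p:ℝ) := by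
    intro k; simp only [hu]; split_ifs
    · linarith
    · simp
  have hdb := TDS.diff_bound d u (((d:ℝ) + 1) - p) p
    (by rw [hsu]; linarith) h1 (by rw [hsu]) h1' x y hx hy
  have hbound : ∑ i, u i * (x i - y i) ≤ (d:ℝ) + 1 := by linarith
  have hz : ∑ i, u i * (m i : ℝ) = (((d:ℝ) + 1) - p) * (∑ i ∈ S, (m i : ℝ)) := by
    rw [hsplit (fun i => (m i : ℝ))]
    have : (∑ i ∈ Finset.univ.filter (fun i => ¬ m i ≠ 0), (m i : ℝ)) = 0 := by
      apply Finset.sum_eq_zero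
      intro i hi
      have := (Finset.mem_filter.1 hi).2
      simp only [ne_eq, not_not] at this
      simp [this]
    rw [this]; ring
  have hSsum : (p:ℝ) ≤ ∑ i ∈ S, (m i : ℝ) := by
    have : ∀ i ∈ S, (1:ℝ) ≤ (m i : ℝ) := by
      intro i hi
      have h4 : m i ≠ 0 := by have h6 := Finset.mem_filter.1 hi; exact h6.2
      have h5 : 1 ≤ m i := by have := hmnn i; omega
      exact_mod_cast h5
    calc (p:ℝ) = ∑ _i ∈ S, (1:ℝ) := by simp [hp]
    _ ≤ ∑ i ∈ S, (m i : ℝ) := Finset.sum_le_sum this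
  have hzl : ∑ i, u i * (m i : ℝ) = l * ∑ i, u i * (x i - y i) := by
    rw [Finset.mul_sum]
    apply Finset.sum_congr rfl
    intro i _
    rw [heq i]; ring
  have hkey : (d:ℝ) ≤ (p:ℝ) * (((d:ℝ) + 1) - p) := by nlinarith
  have hfinal : (d:ℝ) ≤ l * ((d:ℝ) + 1) := by
    have hc : (0:ℝ) ≤ ((d:ℝ) + 1) - p := by linarith
    calc (d:ℝ) ≤ (p:ℝ) * (((d:ℝ) + 1) - p) := hkey
    _ ≤ (((d:ℝ) + 1) - p) * (∑ i ∈ S, (m i : ℝ)) := by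
        rw [mul_comm]; exact mul_le_mul_of_nonneg_left hSsum hc
    _ = l * ∑ i, u i * (x i - y i) := by rw [← hz, hzl]
    _ ≤ l * ((d:ℝ) + 1) := mul_le_mul_of_nonneg_left hbound hl.le
  rw [div_le_iff₀ (by positivity)]
  linarith

lemma TDS.neg_single_mem (d : ℕ) (hd : 1 ≤ d) (i : Fin d) :
    (-(d : ℝ)⁻¹) • (Pi.single i (1:ℝ) : Fin d → ℝ) ∈ stdTerminal d := by
  have hd0 : (d : ℝ) ≠ 0 := by positivity
  set z : Fin d → (Fin d → ℝ) := fun k => if k = i then (fun _ => (-1:ℝ)) else Pi.single k 1 with hz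
  have hsum : ∑ k, z k = (-(1:ℝ)) • (Pi.single i (1:ℝ) : Fin d → ℝ) := by
    have h1 : ∀ k, z k = Pi.single k (1:ℝ) + (if k = i then (fun _ => (-1:ℝ)) - Pi.single i 1 else 0) := by
      intro k
      by_cases h : k = i <;> simp [hz, h]
    rw [Finset.sum_congr rfl fun k _ => h1 k, Finset.sum_add_distrib]
    simp only [Finset.sum_ite_eq', Finset.mem_univ, if_true]
    have huniv : ∑ k : Fin d, Pi.single k (1:ℝ) = fun _ => (1:ℝ) := by
      funext m
      simp [Finset.sum_apply, Pi.single_apply]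
    rw [huniv]
    funext m; simp; ring
  have hw : ∑ _k : Fin d, ((d:ℝ)⁻¹) = 1 := by simp [hd0]
  have hzm : ∀ k ∈ (Finset.univ : Finset (Fin d)),
      z k ∈ (insert (fun _ => (-1 : ℝ)) (Set.range fun j : Fin d => Pi.single j (1 : ℝ))) := by
    intro k _
    by_cases h : k = i
    · exact Set.mem_insert_iff.2 (Or.inl (by simp [hz, h]))
    · exact Set.mem_insert_iff.2 (Or.inr ⟨k, by simp [hz, h]⟩)
  have hmem := Finset.centerMass_mem_convexHull (Finset.univ : Finset (Fin d))
    (w := fun _ => (d:ℝ)⁻¹) (fun k _ => by positivity) (by rw [hw]; norm_num) hzm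
  rw [Finset.centerMass_eq_of_sum_1 _ _ hw] at hmem
  have heq : ∑ k, ((d:ℝ)⁻¹) • z k = (-(d : ℝ)⁻¹) • (Pi.single i (1:ℝ) : Fin d → ℝ) := by
    rw [← Finset.smul_sum, hsum]; module
  rw [heq] at hmem
  exact hmem

lemma TDS.single_mem (d : ℕ) (i : Fin d) : (Pi.single i (1:ℝ) : Fin d → ℝ) ∈ stdTerminal d :=
  subset_convexHull ℝ _ (Set.mem_insert_iff.2 (Or.inr ⟨i, rfl⟩))

/-- **Successive minima of the difference body of the terminal simplex.** For every
`j ∈ {1,…,d}`, `λ_j(T_d - T_d, ℤ^d) = d/(d+1)`. -/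
theorem succMin_diff_stdTerminal (d j : ℕ) (hj : 1 ≤ j) (hjd : j ≤ d) :
    succMin d j (stdTerminal d - stdTerminal d) = (d : ℝ) / ((d : ℝ) + 1) := by
  have hd : 1 ≤ d := le_trans hj hjd
  have hdR : (1:ℝ) ≤ (d:ℝ) := by exact_mod_cast hd
  have hd1 : (0:ℝ) < (d:ℝ) + 1 := by linarith
  have hd0 : (0:ℝ) < (d:ℝ) := by linarith
  -- the witness family
  set l₀ : ℝ := (d : ℝ) / ((d : ℝ) + 1) with hl₀
  have hl₀pos : 0 < l₀ := by positivity
  have hwitness : l₀ ∈ {l : ℝ | 0 < l ∧ ∃ v : Fin j → (Fin d → ℝ),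
      (∀ t, v t ∈ intLat d) ∧ LinearIndependent ℝ v ∧
      ∀ t, v t ∈ l • (stdTerminal d - stdTerminal d)} := by
    refine ⟨hl₀pos, fun t => Pi.single (Fin.castLE hjd t) (1:ℝ), ?_, ?_, ?_⟩
    · intro t k
      by_cases h : k = Fin.castLE hjd t
      · exact ⟨1, by subst h; simp⟩
      · exact ⟨0, by simp [Pi.single_apply, h]⟩
    · have h := (Pi.basisFun ℝ (Fin d)).linearIndependent
      have h2 := h.comp (Fin.castLE hjd) (Fin.castLE_injective hjd)
      convert h2 using 2 with t
      simp [Pi.basisFun_apply]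
    · intro t
      set i : Fin d := Fin.castLE hjd t
      refine Set.mem_smul_set.2 ⟨(Pi.single i (1:ℝ) : Fin d → ℝ)
        - (-(d : ℝ)⁻¹) • (Pi.single i (1:ℝ) : Fin d → ℝ), ?_, ?_⟩
      · exact Set.sub_mem_sub (TDS.single_mem d i) (TDS.neg_single_mem d hd i)
      · funext k
        simp only [Pi.smul_apply, Pi.sub_apply, smul_eq_mul]
        have hdne : (d:ℝ) ≠ 0 := ne_of_gt hd0
        field_simp [hl₀]
        simp only [hl₀, i]
        field_simp
        ring
  apply le_antisymm
  · -- sInf ≤ l₀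
    apply csInf_le
    · exact ⟨0, fun b hb => le_of_lt hb.1⟩
    · exact hwitness
  · -- l₀ ≤ sInf
    apply le_csInf ⟨l₀, hwitness⟩
    rintro l ⟨hlpos, v, hlat, hli, hmem⟩
    have ht0 : (0:ℕ) < j := hj
    set t0 : Fin j := ⟨0, ht0⟩
    have hz0 : v t0 ≠ 0 := hli.ne_zero t0
    obtain ⟨w, hw, hwl⟩ := Set.mem_smul_set.1 (hmem t0)
    obtain ⟨x, hx, y, hy, hxy⟩ := Set.mem_sub.1 hw
    -- integer coordinates
    choose m hm using hlat t0
    have heq : ∀ i, (m i : ℝ) = l * (x i - y i) := by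
      intro i
      rw [← hm i, ← hwl, ← hxy]
      simp [mul_comm]
    have hmne : ∃ i, m i ≠ 0 := by
      by_contra h
      push_neg at h
      apply hz0
      funext i
      rw [hm i, h i]
      simp
    obtain ⟨i1, hi1⟩ := hmne
    have hle1 : (d : ℝ) / ((d : ℝ) + 1) ≤ 1 := by
      rw [div_le_one hd1]; linarith
    by_cases hpos : ∃ i, 1 ≤ m i
    · obtain ⟨ip, hip⟩ := hpos
      by_cases hneg : ∃ i, m i ≤ -1
      · obtain ⟨iq, hiq⟩ := hneg
        have := TDS.key_mixed d l hlpos m ip iq hip hiq x y hx hy heq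
        linarith
      · push_neg at hneg
        have hnn : ∀ i, 0 ≤ m i := by intro i; have := hneg i; omega
        exact TDS.key_nonneg d l hlpos m hnn ip hip x y hx hy heq
    · push_neg at hpos
      have hnp : ∀ i, m i ≤ 0 := by intro i; have := hpos i; omega
      have hi1' : 1 ≤ -m i1 := by have := hnp i1; omega
      have heq' : ∀ i, ((-m i : ℤ) : ℝ) = l * (y i - x i) := by
        intro i
        push_cast
        rw [heq i]; ring
      exact TDS.key_nonneg d l hlpos (fun i => -m i) (fun i => show (0:ℤ) ≤ -m i by have := hnp i; omega)
        i1 hi1' y x hy hx heq'
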